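/- Let ℓ₁ ≠ ℓ₂ be positive reals, b₁ > 0, q₁ ∈ ℝ, and consider B₁ = D(b₁)·S(q₁) (lower triangular) and B₂ = R(t₂)·D(b₂)·S(q₂) with t₂ ∈ (0, π), b₂ > 0, q₂ ∈ ℝ. Then the (1,1) entry of the commutator [B₁·T(w², ℓ₁), B₂·T(w², ℓ₂)] does not vanish identically in w > 0. Specifically, the normalized function D(w) + E(w)/w + F(w)/w², where D(w) = −sin(ℓ₁w)·cos(ℓ₂w) and E, F are bounded, cannot vanish for all w > 0. -/

import Mathlib

open Real Matrix

noncomputable def freeMonodromy (E ℓ : ℝ) : Matrix (Fin 2) (Fin 2) ℝ :=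
  !![Real.cos (Real.sqrt E * ℓ), Real.sin (Real.sqrt E * ℓ) / Real.sqrt E;
     -(Real.sqrt E * Real.sin (Real.sqrt E * ℓ)), Real.cos (Real.sqrt E * ℓ)]

noncomputable def rotMat (t : ℝ) : Matrix (Fin 2) (Fin 2) ℝ :=
  !![Real.cos t, -Real.sin t; Real.sin t, Real.cos t]

noncomputable def diagMat (b : ℝ) : Matrix (Fin 2) (Fin 2) ℝ :=
  !![b, 0; 0, 1 / b]

def shearMat (q : ℝ) : Matrix (Fin 2) (Fin 2) ℝ :=
  !![1, 0; q, 1]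

lemma hasDerivAt_sin_mul (c x : ℝ) :
    HasDerivAt (fun w => Real.sin (c * w)) (c * Real.cos (c * x)) x := by
  have h1 : HasDerivAt (fun w : ℝ => c * w) c x := by
    simpa using (hasDerivAt_id x).const_mul c
  exact ((Real.hasDerivAt_sin (c * x)).comp x h1).congr_deriv (mul_comm _ _)

lemma sin_div_bound (x c : ℝ) : |Real.sin x / c| ≤ 1 / |c| := by
  rcases eq_or_ne c 0 with rfl | hc
  · simp
  · rw [abs_div]
    exact div_le_div₀ zero_le_one (Real.abs_sin_le_one x) (abs_pos.2 hc) le_rfl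

set_option maxHeartbeats 1000000 in
lemma key_nonvanish (ℓ₁ ℓ₂ : ℝ) (h₁ : ℓ₁ > 0) (h₂ : ℓ₂ > 0) (hne : ℓ₁ ≠ ℓ₂)
    (Efn Ffn : ℝ → ℝ) (M : ℝ) (hM : ∀ w, |Efn w| ≤ M ∧ |Ffn w| ≤ M) :
    ¬ ∀ w : ℝ, w > 0 →
      -Real.sin (ℓ₁ * w) * Real.cos (ℓ₂ * w) + Efn w / w + Ffn w / w ^ 2 = 0 := by
  intro h
  have hMnn : 0 ≤ M := le_trans (abs_nonneg _) (hM 0).1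
  have hd0 : ℓ₁ - ℓ₂ ≠ 0 := sub_ne_zero.2 hne
  set f : ℝ → ℝ := fun w => Real.sin (ℓ₁ * w) * Real.cos (ℓ₂ * w) with hf
  set G : ℝ → ℝ := fun w => w / 4 + Real.sin (2 * ℓ₂ * w) / (8 * ℓ₂)
      - Real.sin (2 * ℓ₁ * w) / (8 * ℓ₁)
      - Real.sin (2 * (ℓ₁ - ℓ₂) * w) / (16 * (ℓ₁ - ℓ₂))
      - Real.sin (2 * (ℓ₁ + ℓ₂) * w) / (16 * (ℓ₁ + ℓ₂)) with hG
  have hd : ∀ w : ℝ, HasDerivAt G ((f w) ^ 2) w := by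
    intro w
    have hder : HasDerivAt G (1 / 4 + (2 * ℓ₂) * Real.cos (2 * ℓ₂ * w) / (8 * ℓ₂)
        - (2 * ℓ₁) * Real.cos (2 * ℓ₁ * w) / (8 * ℓ₁)
        - (2 * (ℓ₁ - ℓ₂)) * Real.cos (2 * (ℓ₁ - ℓ₂) * w) / (16 * (ℓ₁ - ℓ₂))
        - (2 * (ℓ₁ + ℓ₂)) * Real.cos (2 * (ℓ₁ + ℓ₂) * w) / (16 * (ℓ₁ + ℓ₂))) w := by
      exact ((((hasDerivAt_id w).div_const 4).add
          ((hasDerivAt_sin_mul (2 * ℓ₂) w).div_const (8 * ℓ₂))).sub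
          ((hasDerivAt_sin_mul (2 * ℓ₁) w).div_const (8 * ℓ₁))).sub
          ((hasDerivAt_sin_mul (2 * (ℓ₁ - ℓ₂)) w).div_const (16 * (ℓ₁ - ℓ₂))) |>.sub
          ((hasDerivAt_sin_mul (2 * (ℓ₁ + ℓ₂)) w).div_const (16 * (ℓ₁ + ℓ₂)))
    convert hder using 1
    have e1 : (2 * ℓ₂) * Real.cos (2 * ℓ₂ * w) / (8 * ℓ₂) = Real.cos (2 * ℓ₂ * w) / 4 := by
      field_simp; ring
    have e2 : (2 * ℓ₁) * Real.cos (2 * ℓ₁ * w) / (8 * ℓ₁) = Real.cos (2 * ℓ₁ * w) / 4 := by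
      field_simp; ring
    have e3 : (2 * (ℓ₁ - ℓ₂)) * Real.cos (2 * (ℓ₁ - ℓ₂) * w) / (16 * (ℓ₁ - ℓ₂))
        = Real.cos (2 * (ℓ₁ - ℓ₂) * w) / 8 := by
      field_simp; ring
    have e4 : (2 * (ℓ₁ + ℓ₂)) * Real.cos (2 * (ℓ₁ + ℓ₂) * w) / (16 * (ℓ₁ + ℓ₂))
        = Real.cos (2 * (ℓ₁ + ℓ₂) * w) / 8 := by
      have : ℓ₁ + ℓ₂ ≠ 0 := by positivity
      field_simp; ring
    rw [e1, e2, e3, e4]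
    have a1 : 2 * (ℓ₁ - ℓ₂) * w = 2 * (ℓ₁ * w) - 2 * (ℓ₂ * w) := by ring
    have a2 : 2 * (ℓ₁ + ℓ₂) * w = 2 * (ℓ₁ * w) + 2 * (ℓ₂ * w) := by ring
    have a3 : 2 * ℓ₁ * w = 2 * (ℓ₁ * w) := by ring
    have a4 : 2 * ℓ₂ * w = 2 * (ℓ₂ * w) := by ring
    rw [hf]
    simp only [a1, a2, a3, a4, Real.cos_sub, Real.cos_add, Real.cos_two_mul, Real.sin_two_mul]
    linear_combination (Real.cos (ℓ₂ * w)) ^ 2 * Real.sin_sq_add_cos_sq (ℓ₁ * w)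
  -- constants
  have habs1 : |16 * (ℓ₁ - ℓ₂)| > 0 := abs_pos.2 (by positivity)
  set C₀ : ℝ := 1 / |8 * ℓ₂| + 1 / |8 * ℓ₁| + 1 / |16 * (ℓ₁ - ℓ₂)| + 1 / |16 * (ℓ₁ + ℓ₂)| with hC₀
  have hC₀pos : 0 < C₀ := by
    have : |8 * ℓ₂| > 0 := abs_pos.2 (by positivity)
    have : |8 * ℓ₁| > 0 := abs_pos.2 (by positivity)
    have : |16 * (ℓ₁ + ℓ₂)| > 0 := abs_pos.2 (by positivity)
    positivity
  set T : ℝ := 1 + 16 * C₀ + 32 * M ^ 2 with hT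
  clear_value T C₀
  have hT1 : 1 ≤ T := by nlinarith
  have hT0 : 0 < T := by linarith
  have hTle : T ≤ 2 * T := by linarith
  have hfc : Continuous f := by fun_prop
  have hint : ∫ w in T..(2 * T), (f w) ^ 2 = G (2 * T) - G T :=
    intervalIntegral.integral_eq_sub_of_hasDerivAt (fun w _ => hd w)
      ((hfc.pow 2).intervalIntegrable _ _)
  -- lower bound
  have hlow : T / 4 - 2 * C₀ ≤ G (2 * T) - G T := by
    have b1 := abs_le.mp (sin_div_bound (2 * ℓ₂ * (2 * T)) (8 * ℓ₂))
    have b2 := abs_le.mp (sin_div_bound (2 * ℓ₂ * T) (8 * ℓ₂))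
    have b3 := abs_le.mp (sin_div_bound (2 * ℓ₁ * (2 * T)) (8 * ℓ₁))
    have b4 := abs_le.mp (sin_div_bound (2 * ℓ₁ * T) (8 * ℓ₁))
    have b5 := abs_le.mp (sin_div_bound (2 * (ℓ₁ - ℓ₂) * (2 * T)) (16 * (ℓ₁ - ℓ₂)))
    have b6 := abs_le.mp (sin_div_bound (2 * (ℓ₁ - ℓ₂) * T) (16 * (ℓ₁ - ℓ₂)))
    have b7 := abs_le.mp (sin_div_bound (2 * (ℓ₁ + ℓ₂) * (2 * T)) (16 * (ℓ₁ + ℓ₂)))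
    have b8 := abs_le.mp (sin_div_bound (2 * (ℓ₁ + ℓ₂) * T) (16 * (ℓ₁ + ℓ₂)))
    rw [hG]
    simp only
    have hC := hC₀
    linarith [b1.1, b1.2, b2.1, b2.2, b3.1, b3.2, b4.1, b4.2, b5.1, b5.2, b6.1, b6.2,
      b7.1, b7.2, b8.1, b8.2, hC]
  -- upper bound
  have hup : ∫ w in T..(2 * T), (f w) ^ 2 ≤ 4 * M ^ 2 / T := by
    have hmono : ∫ w in T..(2 * T), (f w) ^ 2 ≤ ∫ _w in T..(2 * T), (2 * M / T) ^ 2 := by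
      apply intervalIntegral.integral_mono_on hTle ((hfc.pow 2).intervalIntegrable _ _)
        (intervalIntegrable_const)
      intro w hw
      have hwT : T ≤ w := hw.1
      have hw1 : 1 ≤ w := le_trans hT1 hwT
      have hw0 : 0 < w := by linarith
      have heq := h w hw0
      have hfw : f w = Efn w / w + Ffn w / w ^ 2 := by rw [hf]; simp only; linarith
      have hb : |f w| ≤ 2 * M / T := by
        rw [hfw]
        have h1 : |Efn w / w| ≤ M / T := by
          rw [abs_div]
          rw [abs_of_pos hw0]
          apply div_le_div₀ (by linarith [(hM w).1, abs_nonneg (Efn w)]) (hM w).1 hT0 hwT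
        have h2 : |Ffn w / w ^ 2| ≤ M / T := by
          rw [abs_div, abs_of_pos (by positivity : (0:ℝ) < w ^ 2)]
          apply div_le_div₀ (by linarith [(hM w).2, abs_nonneg (Ffn w)]) (hM w).2 hT0
          nlinarith
        calc |Efn w / w + Ffn w / w ^ 2| ≤ |Efn w / w| + |Ffn w / w ^ 2| := abs_add_le _ _
          _ ≤ 2 * M / T := by
              have : 2 * M / T = M / T + M / T := by ring
              linarith
      calc (f w) ^ 2 = |f w| ^ 2 := (sq_abs _).symm
        _ ≤ (2 * M / T) ^ 2 := by
            apply pow_le_pow_left₀ (abs_nonneg _) hb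
    rw [intervalIntegral.integral_const, smul_eq_mul] at hmono
    calc ∫ w in T..(2 * T), (f w) ^ 2 ≤ (2 * T - T) * (2 * M / T) ^ 2 := hmono
      _ = 4 * M ^ 2 / T := by field_simp; ring
  rw [hint] at hup
  have hfinal : T / 4 - 2 * C₀ ≤ 4 * M ^ 2 / T := le_trans hlow hup
  have h4 : (T / 4 - 2 * C₀) * T ≤ 4 * M ^ 2 := by
    rw [← le_div_iff₀ hT0]; exact hfinal
  rw [hT] at h4
  have hexp : ((1 + 16 * C₀ + 32 * M ^ 2) / 4 - 2 * C₀) * (1 + 16 * C₀ + 32 * M ^ 2)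
      = 1 / 4 + 6 * C₀ + 16 * M ^ 2 + 32 * C₀ ^ 2 + 192 * C₀ * M ^ 2 + 256 * M ^ 2 * M ^ 2 := by
    ring
  rw [hexp] at h4
  have n1 : 0 ≤ C₀ ^ 2 := sq_nonneg C₀
  have n2 : 0 ≤ M ^ 2 := sq_nonneg M
  have n3 : 0 ≤ C₀ * M ^ 2 := mul_nonneg hC₀pos.le n2
  have n4 : 0 ≤ M ^ 2 * M ^ 2 := mul_nonneg n2 n2
  linarith [h4, hC₀pos, n1, n2, n3, n4]

lemma abs_trig_comb (a b s1 s2 s3 s4 : ℝ) (h1 : |s1| ≤ 1) (h2 : |s2| ≤ 1)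
    (h3 : |s3| ≤ 1) (h4 : |s4| ≤ 1) :
    |a * s1 * s2 + b * (s3 * s4)| ≤ |a| + |b| := by
  calc |a * s1 * s2 + b * (s3 * s4)| ≤ |a * s1 * s2| + |b * (s3 * s4)| := abs_add_le _ _
    _ ≤ |a| + |b| := by
        rw [abs_mul, abs_mul, abs_mul, abs_mul]
        have na := abs_nonneg a
        have nb := abs_nonneg b
        have n1 := abs_nonneg s1
        have n2 := abs_nonneg s2
        have n3 := abs_nonneg s3
        have n4 := abs_nonneg s4
        have q1 : |a| * |s1| * |s2| ≤ |a| := by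
          nlinarith [mul_nonneg na n2, mul_nonneg na n1]
        have q2 : |b| * (|s3| * |s4|) ≤ |b| := by
          nlinarith [mul_nonneg nb n4, mul_nonneg nb n3]
        linarith

theorem mixed_case_commutator_nonvanishing
    (ℓ₁ ℓ₂ b₁ b₂ q₁ q₂ t₂ : ℝ)
    (h₁ : ℓ₁ > 0) (h₂ : ℓ₂ > 0) (hne : ℓ₁ ≠ ℓ₂)
    (hb₁ : b₁ > 0) (hb₂ : b₂ > 0) (ht₂ : t₂ ∈ Set.Ioo 0 Real.pi) :
    (¬ ∀ w : ℝ, w > 0 →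
      ((diagMat b₁ * shearMat q₁ * freeMonodromy (w ^ 2) ℓ₁)
          * (rotMat t₂ * diagMat b₂ * shearMat q₂ * freeMonodromy (w ^ 2) ℓ₂)
        - (rotMat t₂ * diagMat b₂ * shearMat q₂ * freeMonodromy (w ^ 2) ℓ₂)
          * (diagMat b₁ * shearMat q₁ * freeMonodromy (w ^ 2) ℓ₁)) 0 0 = 0) ∧
    (∀ Efn Ffn : ℝ → ℝ, (∃ M : ℝ, ∀ w : ℝ, |Efn w| ≤ M ∧ |Ffn w| ≤ M) →
      ¬ ∀ w : ℝ, w > 0 →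
        -Real.sin (ℓ₁ * w) * Real.cos (ℓ₂ * w) + Efn w / w + Ffn w / w ^ 2 = 0) := by
  obtain ⟨ht0, htpi⟩ := ht₂
  have hst : 0 < Real.sin t₂ := Real.sin_pos_of_pos_of_lt_pi ht0 htpi
  constructor
  · -- part 1
    intro hall
    set K : ℝ := Real.sin t₂ / (b₁ * b₂) with hK
    have hKpos : 0 < K := by positivity
    set x₁ : ℝ := (b₂ * Real.cos t₂ - q₂ / b₂ * Real.sin t₂) / b₁ - b₁ * Real.cos t₂ / b₂
      with hx₁
    set y₁ : ℝ := q₁ * Real.sin t₂ / (b₁ * b₂) with hy₁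
    set x₂ : ℝ := b₁ * (b₂ * Real.sin t₂ + q₂ / b₂ * Real.cos t₂) with hx₂
    set y₂ : ℝ := -((b₂ * Real.cos t₂ - q₂ / b₂ * Real.sin t₂) * q₁ / b₁) with hy₂
    set Efn : ℝ → ℝ := fun w =>
      (x₁ * Real.sin (ℓ₁ * w) * Real.sin (ℓ₂ * w)
        + y₁ * (Real.cos (ℓ₁ * w) * Real.cos (ℓ₂ * w))) / K with hEfn
    set Ffn : ℝ → ℝ := fun w =>
      (x₂ * Real.sin (ℓ₁ * w) * Real.cos (ℓ₂ * w)
        + y₂ * (Real.sin (ℓ₂ * w) * Real.cos (ℓ₁ * w))) / K with hFfn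
    set M : ℝ := (|x₁| + |y₁| + |x₂| + |y₂|) / K with hM
    have hMb : ∀ w : ℝ, |Efn w| ≤ M ∧ |Ffn w| ≤ M := by
      intro w
      have s1 := Real.abs_sin_le_one (ℓ₁ * w)
      have s2 := Real.abs_sin_le_one (ℓ₂ * w)
      have c1 := Real.abs_cos_le_one (ℓ₁ * w)
      have c2 := Real.abs_cos_le_one (ℓ₂ * w)
      constructor
      · rw [hEfn]
        simp only
        rw [abs_div, abs_of_pos hKpos, hM]
        refine div_le_div₀ (by positivity) ?_ hKpos le_rfl
        calc |x₁ * Real.sin (ℓ₁ * w) * Real.sin (ℓ₂ * w)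
              + y₁ * (Real.cos (ℓ₁ * w) * Real.cos (ℓ₂ * w))| ≤ |x₁| + |y₁| :=
              abs_trig_comb _ _ _ _ _ _ s1 s2 c1 c2
          _ ≤ |x₁| + |y₁| + |x₂| + |y₂| := by
              have := abs_nonneg x₂; have := abs_nonneg y₂; linarith
      · rw [hFfn]
        simp only
        rw [abs_div, abs_of_pos hKpos, hM]
        refine div_le_div₀ (by positivity) ?_ hKpos le_rfl
        calc |x₂ * Real.sin (ℓ₁ * w) * Real.cos (ℓ₂ * w)
              + y₂ * (Real.sin (ℓ₂ * w) * Real.cos (ℓ₁ * w))| ≤ |x₂| + |y₂| :=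
              abs_trig_comb _ _ _ _ _ _ s1 c2 s2 c1
          _ ≤ |x₁| + |y₁| + |x₂| + |y₂| := by
              have := abs_nonneg x₁; have := abs_nonneg y₁; linarith
    apply key_nonvanish ℓ₁ ℓ₂ h₁ h₂ hne Efn Ffn M hMb
    intro w hw
    have hent :
        ((diagMat b₁ * shearMat q₁ * freeMonodromy (w ^ 2) ℓ₁)
            * (rotMat t₂ * diagMat b₂ * shearMat q₂ * freeMonodromy (w ^ 2) ℓ₂)
          - (rotMat t₂ * diagMat b₂ * shearMat q₂ * freeMonodromy (w ^ 2) ℓ₂)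
            * (diagMat b₁ * shearMat q₁ * freeMonodromy (w ^ 2) ℓ₁)) 0 0
        = K * w * (-Real.sin (ℓ₁ * w) * Real.cos (ℓ₂ * w)
            + Efn w / w + Ffn w / w ^ 2) := by
      have hs : Real.sqrt (w ^ 2) = w := Real.sqrt_sq hw.le
      have hw0 : w ≠ 0 := ne_of_gt hw
      have hb1 : b₁ ≠ 0 := ne_of_gt hb₁
      have hb2 : b₂ ≠ 0 := ne_of_gt hb₂
      have hs0 : Real.sin t₂ ≠ 0 := ne_of_gt hst
      rw [hEfn, hFfn, hK, hx₁, hy₁, hx₂, hy₂]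
      simp only [freeMonodromy, rotMat, diagMat, shearMat, hs, Matrix.sub_apply,
        Matrix.mul_apply, Fin.sum_univ_two, Matrix.cons_val', Matrix.cons_val_zero,
        Matrix.cons_val_one, Matrix.head_cons, Matrix.empty_val', Matrix.cons_val_fin_one,
        Matrix.head_fin_const, Matrix.of_apply]
      rw [mul_comm w ℓ₁, mul_comm w ℓ₂]
      field_simp
      ring
    have h0 := hall w hw
    rw [hent] at h0
    have hKw : K * w ≠ 0 := by positivity
    exact (mul_eq_zero.mp h0).resolve_left hKw
  · -- part 2
    rintro Efn Ffn ⟨M, hM⟩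
    exact key_nonvanish ℓ₁ ℓ₂ h₁ h₂ hne Efn Ffn M hM
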